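/- If a child c of u is heavy (s(c) > s(u)/2) and another child c' of u has rank(c') ≥ rank(c) where rank(x)=⌊log₂ s(x)⌋, then s(c') > s(c)/2; consequently at most one child besides the heavy child can have rank ≥ rank(c). -/
import Mathlib


/-- If `c` is a heavy child of `u` (`s c > s u / 2`, sizes positive integers with
`Σ_{children} s ≤ s u`) and another child `c'` has `rank c' ≥ rank c` where
`rank x = ⌊log₂ (s x)⌋`, then `s c' > s c / 2`; consequently at most one child
besides the heavy child `c` can have rank at least `rank c`. -/
theorem stmt10 {ι : Type*} [DecidableEq ι] (s : ι → ℕ) (su : ℕ) (C : Finset ι)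
    (hpos : ∀ x ∈ C, 1 ≤ s x)
    (hsum : ∑ x ∈ C, s x ≤ su)
    (c : ι) (hc : c ∈ C) (hheavy : su < 2 * s c) :
    (∀ c' ∈ C, Nat.log 2 (s c) ≤ Nat.log 2 (s c') → s c < 2 * s c') ∧
      (C.filter (fun c' => c' ≠ c ∧ Nat.log 2 (s c) ≤ Nat.log 2 (s c'))).card ≤ 1 := by
  have key : ∀ c' ∈ C, Nat.log 2 (s c) ≤ Nat.log 2 (s c') →
      2 ^ Nat.log 2 (s c) ≤ s c' := by
    intro c' hc' hlog
    calc 2 ^ Nat.log 2 (s c) ≤ 2 ^ Nat.log 2 (s c') := Nat.pow_le_pow_right (by norm_num) hlog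
      _ ≤ s c' := Nat.pow_log_le_self 2 (by have := hpos c' hc'; omega)
  have hclt : s c < 2 ^ (Nat.log 2 (s c) + 1) := Nat.lt_pow_succ_log_self (by norm_num) _
  refine ⟨fun c' hc' hlog => ?_, ?_⟩
  · have := key c' hc' hlog
    have : 2 ^ (Nat.log 2 (s c) + 1) ≤ 2 * s c' := by
      rw [pow_succ]; omega
    omega
  · by_contra h
    push_neg at h
    obtain ⟨a, ha, b, hb, hab⟩ := Finset.one_lt_card.mp h
    simp only [Finset.mem_filter] at ha hb
    obtain ⟨haC, hac, haL⟩ := ha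
    obtain ⟨hbC, hbc, hbL⟩ := hb
    have h1 := key a haC haL
    have h2 := key b hbC hbL
    have hsub : ({a, b, c} : Finset ι) ⊆ C := by
      intro x hx
      simp only [Finset.mem_insert, Finset.mem_singleton] at hx
      rcases hx with rfl | rfl | rfl <;> assumption
    have hsum3 : ∑ x ∈ ({a, b, c} : Finset ι), s x ≤ su :=
      le_trans (Finset.sum_le_sum_of_subset hsub) hsum
    rw [Finset.sum_insert (by simp [hab, hac]), Finset.sum_insert (by simp [hbc]),
      Finset.sum_singleton] at hsum3
    have : 2 ^ (Nat.log 2 (s c) + 1) ≤ s a + s b := by rw [pow_succ]; omega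
    omega
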